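/- Under the Lie–Poisson realization hypotheses, fix ε ∈ K and for 2 ≤ i ≤ N and λ ∈ K with λ ≠ 0 and λ ≠ ε define the loop coproducts Δ^(i)_λ(α) := λ⁻¹ • (Σ_{j=1}^{i−1} y α j) + (λ − ε)⁻¹ • (y α i). Then for every 2 ≤ i ≤ N, all admissible λ ≠ μ and all α, β ∈ Fin M: {Δ^(i)_λ(α), Δ^(i)_μ(β)} = (μ − λ)⁻¹ • Σ_γ (c α β γ) • (Δ^(i)_λ(γ) − Δ^(i)_μ(γ)); i.e. for each fixed i these loop coproducts satisfy the rational Gaudin algebra relations. -/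

import Mathlib

open scoped BigOperators

/-- A Poisson algebra structure over `K` on a commutative `K`-algebra `B`:
a `K`-bilinear bracket that is antisymmetric, satisfies the Jacobi identity and
the Leibniz rule. -/
structure PoissonStructure (K B : Type*) [CommRing K] [CommRing B] [Algebra K B] where
  bracket : B →ₗ[K] B →ₗ[K] B
  antisymm : ∀ a b : B, bracket a b = - bracket b a
  jacobi : ∀ a b c : B,
    bracket a (bracket b c) + bracket b (bracket c a) + bracket c (bracket a b) = 0
  leibniz : ∀ a b c : B, bracket a (b * c) = bracket a b * c + b * bracket a c

/-- for each fixed `i`, the loop coproducts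
`Δ^(i)_λ(α) = λ⁻¹ • Σ_{j=1}^{i-1} y α j + (λ - ε)⁻¹ • y α i` satisfy the rational
Gaudin algebra relations. -/
theorem loop_coproducts_rational_gaudin
    {K B : Type*} [Field K] [CharZero K] [CommRing B] [Algebra K B]
    (P : PoissonStructure K B) {M N : ℕ} (hM : 0 < M) (hN : 0 < N)
    (c : Fin M → Fin M → Fin M → K)
    (y : Fin M → Fin N → B)
    (hsep : ∀ (α β : Fin M) (i j : Fin N), i ≠ j → P.bracket (y α i) (y β j) = 0)
    (hsame : ∀ (α β : Fin M) (i : Fin N),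
      P.bracket (y α i) (y β i) = ∑ γ, c α β γ • y γ i)
    (ε : K)
    (D : ℕ → K → Fin M → B)
    (hD : ∀ (i : ℕ) (hi2 : 2 ≤ i) (hiN : i ≤ N) (lam : K) (α : Fin M),
      D i lam α =
        lam⁻¹ • (∑ j ∈ Finset.univ.filter (fun j : Fin N => (j : ℕ) + 1 < i), y α j)
          + (lam - ε)⁻¹ • y α ⟨i - 1, by omega⟩) :
    ∀ (i : ℕ), 2 ≤ i → i ≤ N →
      ∀ (lam mu : K), lam ≠ mu → lam ≠ 0 → lam ≠ ε → mu ≠ 0 → mu ≠ ε →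
      ∀ (α β : Fin M),
        P.bracket (D i lam α) (D i mu β) =
          (mu - lam)⁻¹ • ∑ γ, c α β γ • (D i lam γ - D i mu γ) := by
  intro i hi2 hiN lam mu hne hlam0 hlamE hmu0 hmuE α β
  have hiN1 : i - 1 < N := by omega
  set I : Fin N := ⟨i - 1, hiN1⟩ with hI
  set F := Finset.univ.filter (fun j : Fin N => (j : ℕ) + 1 < i) with hF
  have hIF : ∀ j ∈ F, j ≠ I := by
    intro j hj
    simp only [hF, Finset.mem_filter, Finset.mem_univ, true_and] at hj
    intro h
    rw [h] at hj
    simp only [hI] at hj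
    omega
  set S : Fin M → B := fun γ => ∑ j ∈ F, y γ j with hS
  have hSS : ∀ a b : Fin M, P.bracket (S a) (S b) = ∑ γ, c a b γ • S γ := by
    intro a b
    have h1 : P.bracket (S a) (S b) = ∑ j ∈ F, ∑ k ∈ F, P.bracket (y a j) (y b k) := by
      simp only [hS, map_sum, LinearMap.sum_apply]
      exact Finset.sum_comm
    rw [h1]
    have h2 : ∀ j ∈ F, ∑ k ∈ F, P.bracket (y a j) (y b k) = ∑ γ, c a b γ • y γ j := by
      intro j hj
      rw [Finset.sum_eq_single j]
      · exact hsame a b j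
      · intro k hk hkj; exact hsep a b j k (Ne.symm hkj)
      · intro h; exact absurd hj h
    rw [Finset.sum_congr rfl h2, Finset.sum_comm]
    simp [hS, Finset.smul_sum]
  have hST : ∀ a b : Fin M, P.bracket (S a) (y b I) = 0 := by
    intro a b
    simp only [hS, map_sum, LinearMap.sum_apply]
    exact Finset.sum_eq_zero fun j hj => hsep a b j I (hIF j hj)
  have hTS : ∀ a b : Fin M, P.bracket (y a I) (S b) = 0 := by
    intro a b
    simp only [hS, map_sum]
    exact Finset.sum_eq_zero fun j hj => hsep a b I j (Ne.symm (hIF j hj))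
  rw [hD i hi2 hiN lam α, hD i hi2 hiN mu β]
  have hrw : ∀ γ, D i lam γ - D i mu γ
      = (lam⁻¹ - mu⁻¹) • S γ + ((lam - ε)⁻¹ - (mu - ε)⁻¹) • y γ I := by
    intro γ
    rw [hD i hi2 hiN lam γ, hD i hi2 hiN mu γ, sub_smul, sub_smul]
    abel
  simp only [hrw]
  have LHS : P.bracket (lam⁻¹ • S α + (lam - ε)⁻¹ • y α I)
      (mu⁻¹ • S β + (mu - ε)⁻¹ • y β I)
      = (lam⁻¹ * mu⁻¹) • (∑ γ, c α β γ • S γ)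
        + ((lam - ε)⁻¹ * (mu - ε)⁻¹) • (∑ γ, c α β γ • y γ I) := by
    simp only [map_add, map_smul, LinearMap.add_apply, LinearMap.smul_apply,
      hSS, hST, hTS, hsame, smul_zero, add_zero, zero_add, smul_smul]
    ring_nf
  rw [LHS]
  have RHS : ∑ γ, c α β γ • ((lam⁻¹ - mu⁻¹) • S γ + ((lam - ε)⁻¹ - (mu - ε)⁻¹) • y γ I)
      = (lam⁻¹ - mu⁻¹) • (∑ γ, c α β γ • S γ)
        + ((lam - ε)⁻¹ - (mu - ε)⁻¹) • (∑ γ, c α β γ • y γ I) := by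
    rw [Finset.smul_sum, Finset.smul_sum, ← Finset.sum_add_distrib]
    refine Finset.sum_congr rfl fun γ _ => ?_
    rw [smul_add, smul_comm (c α β γ), smul_comm (c α β γ)]
  rw [RHS, smul_add, smul_smul, smul_smul]
  have hml : mu - lam ≠ 0 := sub_ne_zero.mpr (Ne.symm hne)
  have hlE : lam - ε ≠ 0 := sub_ne_zero.mpr hlamE
  have hmE : mu - ε ≠ 0 := sub_ne_zero.mpr hmuE
  have e1 : lam⁻¹ * mu⁻¹ = (mu - lam)⁻¹ * (lam⁻¹ - mu⁻¹) := by
    field_simp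
  have e2 : (lam - ε)⁻¹ * (mu - ε)⁻¹ = (mu - lam)⁻¹ * ((lam - ε)⁻¹ - (mu - ε)⁻¹) := by
    field_simp
    ring
  rw [e1, e2]
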